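/- Let F(x,λ) = λ⁴ − (1+30x)·λ³ + 42(−x+4x²)·λ² + 72(x²+14x³)·λ − 1728x⁴. If δ > 0 and λ : (1−δ, 1+δ) → ℝ is twice differentiable with λ(1) = 24 and F(x, λ(x)) = 0 for all x ∈ (1−δ, 1+δ), then e := λ′(1)/24 = 34/41 and v := (−λ′(1)² + 24·λ″(1) + 24·λ′(1))/24² = 4816/68921 > 0. -/

import Mathlib

open Set

theorem grid_genus_parameters
    (F : ℝ → ℝ → ℝ)
    (hF : ∀ x l : ℝ, F x l = l ^ 4 - (1 + 30 * x) * l ^ 3 +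
      42 * (-x + 4 * x ^ 2) * l ^ 2 + 72 * (x ^ 2 + 14 * x ^ 3) * l - 1728 * x ^ 4) :
    ∀ (δ : ℝ), 0 < δ → ∀ lam : ℝ → ℝ,
      (∀ x ∈ Set.Ioo (1 - δ) (1 + δ), DifferentiableAt ℝ lam x) →
      (∀ x ∈ Set.Ioo (1 - δ) (1 + δ), DifferentiableAt ℝ (deriv lam) x) →
      lam 1 = 24 →
      (∀ x ∈ Set.Ioo (1 - δ) (1 + δ), F x (lam x) = 0) →
      deriv lam 1 / 24 = 34 / 41 ∧
      (-(deriv lam 1) ^ 2 + 24 * deriv (deriv lam) 1 + 24 * deriv lam 1) / 24 ^ 2 =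
        4816 / 68921 ∧
      0 < (4816 : ℝ) / 68921 := by
  intro δ hδ lam hlam hlam' h24 hroot
  have h1 : (1 : ℝ) ∈ Set.Ioo (1 - δ) (1 + δ) := ⟨by linarith, by linarith⟩
  have hopen : IsOpen (Set.Ioo (1 - δ) (1 + δ)) := isOpen_Ioo
  set P : ℝ → ℝ := fun y => lam y ^ 4 - (1 + 30 * y) * lam y ^ 3 +
      42 * (-y + 4 * y ^ 2) * lam y ^ 2 + 72 * (y ^ 2 + 14 * y ^ 3) * lam y - 1728 * y ^ 4
    with hPdef
  have hP0 : ∀ x ∈ Set.Ioo (1 - δ) (1 + δ), P x = 0 := by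
    intro x hx
    have := hroot x hx
    rw [hF] at this
    simpa [hPdef] using this
  set G : ℝ → ℝ := fun y =>
      4 * lam y ^ 3 * deriv lam y
      - (30 * lam y ^ 3 + (1 + 30 * y) * (3 * lam y ^ 2 * deriv lam y))
      + (42 * (-1 + 8 * y) * lam y ^ 2 + 42 * (-y + 4 * y ^ 2) * (2 * lam y * deriv lam y))
      + (72 * (2 * y + 42 * y ^ 2) * lam y + 72 * (y ^ 2 + 14 * y ^ 3) * deriv lam y)
      - 6912 * y ^ 3
    with hGdef
  -- P has derivative G x at each point of the interval
  have hPG : ∀ x ∈ Set.Ioo (1 - δ) (1 + δ), HasDerivAt P (G x) x := by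
    intro x hx
    have hl : HasDerivAt lam (deriv lam x) x := (hlam x hx).hasDerivAt
    have c1 : HasDerivAt (fun y : ℝ => 1 + 30 * y) 30 x := by
      simpa using ((hasDerivAt_id x).const_mul (30 : ℝ)).const_add (1 : ℝ)
    have c2 : HasDerivAt (fun y : ℝ => -y + 4 * y ^ 2) (-1 + 4 * (2 * x)) x := by
      have := ((hasDerivAt_pow 2 x).const_mul (4 : ℝ)).const_add 0
      have h' : HasDerivAt (fun y : ℝ => -y + 4 * y ^ 2) (-1 + 4 * (2 * x ^ 1)) x :=
        ((hasDerivAt_id x).neg).add ((hasDerivAt_pow 2 x).const_mul (4 : ℝ)) |>.congr_deriv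
          (by ring)
      simpa using h'
    have c3 : HasDerivAt (fun y : ℝ => y ^ 2 + 14 * y ^ 3) (2 * x + 14 * (3 * x ^ 2)) x := by
      have h' := (hasDerivAt_pow 2 x).add ((hasDerivAt_pow 3 x).const_mul (14 : ℝ))
      exact h'.congr_deriv (by push_cast; ring)
    have c4 : HasDerivAt (fun y : ℝ => 1728 * y ^ 4) (1728 * (4 * x ^ 3)) x := by
      have h' := (hasDerivAt_pow 4 x).const_mul (1728 : ℝ)
      simpa using h'.congr_deriv (by push_cast; ring)
    have H := ((((hl.pow 4).sub (c1.mul (hl.pow 3))).add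
        (((c2.mul (hl.pow 2))).const_mul (42 : ℝ))).add
        ((c3.mul hl).const_mul (72 : ℝ))).sub c4
    have hfun : P = fun y => lam y ^ 4 - (1 + 30 * y) * lam y ^ 3 +
        42 * ((-y + 4 * y ^ 2) * lam y ^ 2) + 72 * ((y ^ 2 + 14 * y ^ 3) * lam y)
        - 1728 * y ^ 4 := by
      funext y; simp only [hPdef]; ring
    rw [hfun]
    refine H.congr_deriv ?_
    simp only [hGdef]
    push_cast
    simp only [Pi.pow_apply]
    ring
  -- G vanishes on the interval
  have hG0 : ∀ x ∈ Set.Ioo (1 - δ) (1 + δ), G x = 0 := by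
    intro x hx
    have heq : P =ᶠ[nhds x] fun _ => (0 : ℝ) :=
      Filter.eventuallyEq_of_mem (hopen.mem_nhds hx) hP0
    have hd : deriv P x = 0 := by
      rw [Filter.EventuallyEq.deriv_eq heq]
      simp
    rw [← (hPG x hx).deriv]
    exact hd
  -- first equation : G 1 = 0, giving deriv lam 1 = 816/41
  have hb : deriv lam 1 = 816 / 41 := by
    have hG1 : G 1 = 0 := hG0 1 h1
    simp only [hGdef, h24] at hG1
    nlinarith [hG1]
  -- now differentiate G at 1
  have hl : HasDerivAt lam (deriv lam 1) 1 := (hlam 1 h1).hasDerivAt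
  have hl2 : HasDerivAt (deriv lam) (deriv (deriv lam) 1) 1 := (hlam' 1 h1).hasDerivAt
  set b : ℝ := deriv lam 1
  set c : ℝ := deriv (deriv lam) 1
  have hGd : HasDerivAt G
      (2700 * b ^ 2 + 8856 * c - 69120 * b + 321408
        + (lam 1 - 24) * (12 * b ^ 2 + 4 * lam 1 * c + 48 * c - 180 * b
          + 14 * b + 72 * b)) 1 := by
    -- build derivative of G by combinators, then fix the value with ring using lam 1 = 24
    have q1 : HasDerivAt (fun y : ℝ => 1 + 30 * y) 30 1 := by
      simpa using ((hasDerivAt_id (1 : ℝ)).const_mul (30 : ℝ)).const_add (1 : ℝ)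
    have q2 : HasDerivAt (fun y : ℝ => -1 + 8 * y) 8 1 := by
      simpa using ((hasDerivAt_id (1 : ℝ)).const_mul (8 : ℝ)).const_add (-1 : ℝ)
    have q3 : HasDerivAt (fun y : ℝ => -y + 4 * y ^ 2) 7 1 := by
      have h' := ((hasDerivAt_id (1 : ℝ)).neg).add ((hasDerivAt_pow 2 (1 : ℝ)).const_mul (4 : ℝ))
      exact h'.congr_deriv (by norm_num)
    have q4 : HasDerivAt (fun y : ℝ => 2 * y + 42 * y ^ 2) 86 1 := by
      have h' := ((hasDerivAt_id (1 : ℝ)).const_mul (2 : ℝ)).add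
        ((hasDerivAt_pow 2 (1 : ℝ)).const_mul (42 : ℝ))
      exact h'.congr_deriv (by norm_num)
    have q5 : HasDerivAt (fun y : ℝ => y ^ 2 + 14 * y ^ 3) 44 1 := by
      have h' := (hasDerivAt_pow 2 (1 : ℝ)).add ((hasDerivAt_pow 3 (1 : ℝ)).const_mul (14 : ℝ))
      exact h'.congr_deriv (by norm_num)
    have q6 : HasDerivAt (fun y : ℝ => 6912 * y ^ 3) 20736 1 := by
      have h' := (hasDerivAt_pow 3 (1 : ℝ)).const_mul (6912 : ℝ)
      exact h'.congr_deriv (by norm_num)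
    have H :=
      (((((hl.pow 3).const_mul (4 : ℝ)).mul hl2).sub
          (((hl.pow 3).const_mul (30 : ℝ)).add
            (q1.mul (((hl.pow 2).const_mul (3 : ℝ)).mul hl2)))).add
        (((q2.mul (hl.pow 2)).const_mul (42 : ℝ)).add
          ((q3.mul ((hl.const_mul (2 : ℝ)).mul hl2)).const_mul (42 : ℝ)))).add
        (((q4.mul hl).const_mul (72 : ℝ)).add ((q5.mul hl2).const_mul (72 : ℝ))) |>.sub q6
    have hfun : G = fun y =>
        4 * lam y ^ 3 * deriv lam y
        - (30 * lam y ^ 3 + (1 + 30 * y) * (3 * lam y ^ 2 * deriv lam y))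
        + (42 * ((-1 + 8 * y) * lam y ^ 2) + 42 * ((-y + 4 * y ^ 2) * (2 * lam y * deriv lam y)))
        + (72 * ((2 * y + 42 * y ^ 2) * lam y) + 72 * ((y ^ 2 + 14 * y ^ 3) * deriv lam y))
        - 6912 * y ^ 3 := by
      funext y; simp only [hGdef]; ring
    rw [hfun]
    refine H.congr_deriv ?_
    have h24' : lam 1 = 24 := h24
    push_cast
    simp only [Pi.pow_apply, Pi.mul_apply]
    rw [show deriv lam 1 = b from rfl]
    rw [h24']
    norm_num
    ring
  have hGd1 : deriv G 1 = 0 := by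
    have heq : G =ᶠ[nhds 1] fun _ => (0 : ℝ) :=
      Filter.eventuallyEq_of_mem (hopen.mem_nhds h1) hG0
    rw [Filter.EventuallyEq.deriv_eq heq]
    simp
  have key2 : 2700 * b ^ 2 + 8856 * c - 69120 * b + 321408 = 0 := by
    have := hGd.deriv
    rw [hGd1] at this
    rw [h24] at this
    linarith [this]
  have hc : c = -118608 / 68921 := by
    rw [hb] at key2
    nlinarith [key2]
  refine ⟨by rw [hb]; norm_num, ?_, by norm_num⟩
  rw [hb, hc]
  norm_num
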